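/- If G is a C4-free graph with independence number α(G) < k for some k ≥ 2, then the vertex set of G can be covered by at most 2^{k−1} − 1 cliques. -/

import Mathlib

open SimpleGraph

variable {V : Type*}

/-- A set of vertices is independent if its vertices are pairwise non-adjacent. -/
def IsIndepSet (G : SimpleGraph V) (s : Set V) : Prop :=
  s.Pairwise fun a b => ¬ G.Adj a b

/-- `G` contains an induced cycle on `n` vertices. -/
def HasInducedCycle (G : SimpleGraph V) (n : ℕ) : Prop :=
  ∃ f : Fin n ↪ V, ∀ i j, G.Adj (f i) (f j) ↔ (SimpleGraph.cycleGraph n).Adj i j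

/-- `G` is even-hole-free: it has no induced cycle of even length at least 4. -/
def EvenHoleFree (G : SimpleGraph V) : Prop :=
  ∀ n, 4 ≤ n → Even n → ¬ HasInducedCycle G n

/-- `G` is C4-free: no induced cycle on 4 vertices. -/
def C4Free (G : SimpleGraph V) : Prop := ¬ HasInducedCycle G 4

lemma common_nbrs_clique (G : SimpleGraph V) (hG : C4Free G) {x y : V}
    (hxy : x ≠ y) (hnadj : ¬ G.Adj x y) :
    G.IsClique {v | G.Adj x v ∧ G.Adj y v} := by
  intro u hu v hv huv
  by_contra hadj
  apply hG
  have hxu : x ≠ u := G.ne_of_adj hu.1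
  have hxv : x ≠ v := G.ne_of_adj hv.1
  have hyu : y ≠ u := G.ne_of_adj hu.2
  have hyv : y ≠ v := G.ne_of_adj hv.2
  refine ⟨⟨![x, u, y, v], ?_⟩, ?_⟩
  · intro i j hij
    fin_cases i <;> fin_cases j <;> simp_all
  · intro i j
    fin_cases i <;> fin_cases j <;>
      rw [cycleGraph_adj'] <;>
      first
        | exact iff_of_false (G.irrefl) (by decide)
        | exact iff_of_true hu.1 (by decide)
        | exact iff_of_true hu.1.symm (by decide)
        | exact iff_of_true hu.2 (by decide)
        | exact iff_of_true hu.2.symm (by decide)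
        | exact iff_of_true hv.1 (by decide)
        | exact iff_of_true hv.1.symm (by decide)
        | exact iff_of_true hv.2 (by decide)
        | exact iff_of_true hv.2.symm (by decide)
        | exact iff_of_false hnadj (by decide)
        | exact iff_of_false (fun h => hnadj h.symm) (by decide)
        | exact iff_of_false hadj (by decide)
        | exact iff_of_false (fun h => hadj h.symm) (by decide)

lemma aux_cover [Fintype V] (G : SimpleGraph V) (hG : C4Free G) :
    ∀ k : ℕ, ∀ S : Set V,
      (∀ s : Finset V, ↑s ⊆ S → _root_.IsIndepSet G ↑s → s.card ≤ k) →
      ∃ 𝒞 : Finset (Set V), 𝒞.card ≤ 2 ^ k - 1 ∧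
        (∀ c ∈ 𝒞, G.IsClique c) ∧ ∀ v ∈ S, ∃ c ∈ 𝒞, v ∈ c := by
  classical
  intro k
  induction k with
  | zero =>
    intro S hS
    refine ⟨∅, by simp, by simp, ?_⟩
    intro v hv
    exfalso
    have := hS {v} (by simpa) (by simp [_root_.IsIndepSet])
    simp at this
  | succ k ih =>
    intro S hS
    by_cases hcl : G.IsClique S
    · refine ⟨{S}, ?_, by simpa using hcl, fun v hv => ⟨S, by simp, hv⟩⟩
      have h2 : 2 ≤ 2 ^ (k + 1) := Nat.le_self_pow (by omega) 2 |>.trans_eq rfl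
      simp
      omega
    · rw [SimpleGraph.isClique_iff, Set.Pairwise] at hcl
      push_neg at hcl
      obtain ⟨x, hx, y, hy, hxyne, hxy⟩ := hcl
      set X : Set V := {v | v ∈ S ∧ ¬ G.Adj x v ∧ v ≠ x} with hXdef
      set Y : Set V := {v | v ∈ S ∧ ¬ G.Adj y v ∧ v ≠ y} with hYdef
      have hsym : Symmetric fun a b => ¬ G.Adj a b :=
        fun a b h h' => h h'.symm
      have hXsmall : ∀ s : Finset V, ↑s ⊆ X → _root_.IsIndepSet G ↑s → s.card ≤ k := by
        intro s hsX hsind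
        have hxs : x ∉ s := fun h => (hsX h).2.2 rfl
        have key := hS (insert x s) ?_ ?_
        · rw [Finset.card_insert_of_notMem hxs] at key; omega
        · rw [Finset.coe_insert]
          exact Set.insert_subset hx (fun v hv => (hsX hv).1)
        · rw [_root_.IsIndepSet, Finset.coe_insert,
            @Set.pairwise_insert_of_symm _ (fun a b => ¬ G.Adj a b) _ _ ⟨hsym⟩]
          exact ⟨hsind, fun b hb _ => (hsX hb).2.1⟩
      have hYsmall : ∀ s : Finset V, ↑s ⊆ Y → _root_.IsIndepSet G ↑s → s.card ≤ k := by
        intro s hsY hsind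
        have hys : y ∉ s := fun h => (hsY h).2.2 rfl
        have key := hS (insert y s) ?_ ?_
        · rw [Finset.card_insert_of_notMem hys] at key; omega
        · rw [Finset.coe_insert]
          exact Set.insert_subset hy (fun v hv => (hsY hv).1)
        · rw [_root_.IsIndepSet, Finset.coe_insert,
            @Set.pairwise_insert_of_symm _ (fun a b => ¬ G.Adj a b) _ _ ⟨hsym⟩]
          exact ⟨hsind, fun b hb _ => (hsY hb).2.1⟩
      obtain ⟨CX, hCX1, hCX2, hCX3⟩ := ih X hXsmall
      obtain ⟨CY, hCY1, hCY2, hCY3⟩ := ih Y hYsmall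
      set C : Set V := {v | G.Adj x v ∧ G.Adj y v} with hCdef
      refine ⟨insert C (CX ∪ CY), ?_, ?_, ?_⟩
      · have h1 : (insert C (CX ∪ CY)).card ≤ (CX ∪ CY).card + 1 :=
          Finset.card_insert_le _ _
        have h2 : (CX ∪ CY).card ≤ CX.card + CY.card := Finset.card_union_le _ _
        have h3 : 2 ^ (k + 1) = 2 ^ k + 2 ^ k := by ring
        have h4 : 1 ≤ 2 ^ k := Nat.one_le_two_pow
        omega
      · intro c hc
        rcases Finset.mem_insert.mp hc with rfl | hc
        · exact common_nbrs_clique G hG hxyne hxy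
        · rcases Finset.mem_union.mp hc with hc | hc
          · exact hCX2 c hc
          · exact hCY2 c hc
      · intro v hv
        by_cases hxv : G.Adj x v
        · by_cases hyv : G.Adj y v
          · exact ⟨C, Finset.mem_insert_self _ _, hxv, hyv⟩
          · have hvy : v ≠ y := fun h => hxy (h ▸ hxv)
            obtain ⟨c, hc, hvc⟩ := hCY3 v ⟨hv, hyv, hvy⟩
            exact ⟨c, Finset.mem_insert_of_mem (Finset.mem_union_right _ hc), hvc⟩
        · by_cases hvx : v = x
          · subst hvx
            obtain ⟨c, hc, hvc⟩ := hCY3 v ⟨hv, fun h => hxy h.symm, hxyne⟩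
            exact ⟨c, Finset.mem_insert_of_mem (Finset.mem_union_right _ hc), hvc⟩
          · obtain ⟨c, hc, hvc⟩ := hCX3 v ⟨hv, hxv, hvx⟩
            exact ⟨c, Finset.mem_insert_of_mem (Finset.mem_union_left _ hc), hvc⟩

/-- If `G` is a `C4`-free graph with independence number less than `k` for some `k ≥ 2`,
then the vertex set of `G` can be covered by at most `2 ^ (k - 1) - 1` cliques. -/
theorem c4free_cliqueCover_of_small_alpha [Fintype V] (G : SimpleGraph V) (hG : C4Free G)
    (k : ℕ) (hk : 2 ≤ k)
    (halpha : ∀ s : Finset V, _root_.IsIndepSet G ↑s → s.card < k) :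
    ∃ 𝒞 : Finset (Set V), 𝒞.card ≤ 2 ^ (k - 1) - 1 ∧
      (∀ c ∈ 𝒞, G.IsClique c) ∧ ∀ v : V, ∃ c ∈ 𝒞, v ∈ c := by
  obtain ⟨𝒞, h1, h2, h3⟩ := aux_cover G hG (k - 1) Set.univ
    (fun s _ hs => by have := halpha s hs; omega)
  exact ⟨𝒞, h1, h2, fun v => h3 v (Set.mem_univ v)⟩
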